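/- Let |ρ| ≤ 1 and v ≠ 0 with ρ − (1−ρ²)v₂/|v|² ≥ 1, and suppose m = kv with k ∈ ℝ, |m − ρv + (0,(1−ρ²)/2)| ≤ (1−ρ²)/2, and (1−ρ)G₃(ρ,v,m) ≤ 0 where G₃(ρ,v,m) = −(v−m)·(v+(0,1+ρ)) + |v−m|²/2. Then 1 ≤ k ≤ ρ − (1−ρ²)v₂/|v|². -/
import Mathlib


open MeasureTheory

noncomputable section

/-- Euclidean dot product on ℝ². -/
def dot (a b : ℝ × ℝ) : ℝ := a.1 * b.1 + a.2 * b.2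

/-- Rotation by 90°: (a,b)⊥ = (−b, a). -/
def perp (a : ℝ × ℝ) : ℝ × ℝ := (-a.2, a.1)

/-- Euclidean norm on ℝ². -/
def nrm (a : ℝ × ℝ) : ℝ := Real.sqrt (a.1 ^ 2 + a.2 ^ 2)

/-- State space ℝ × ℝ² × ℝ² of (ρ, v, m). -/
abbrev Pt := ℝ × (ℝ × ℝ) × (ℝ × ℝ)

/-- The wave cone Λ of stationary IPM. -/
def Lam : Set Pt :=
  {z | dot z.2.1 z.2.1 + z.1 * z.2.1.2 = 0 ∧ dot z.2.2 (perp z.2.1) = 0 ∧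
       dot z.2.2 (z.2.1 + (0, z.1)) = 0}

/-- The constitutive set K. -/
def Kset : Set Pt := {z | |z.1| = 1 ∧ z.2.2 = z.1 • z.2.1}

def G2 (z : Pt) : ℝ := dot z.2.2 (perp z.2.1)

def G3 (z : Pt) : ℝ :=
  -dot (z.2.1 - z.2.2) (z.2.1 + (0, 1 + z.1)) + dot (z.2.1 - z.2.2) (z.2.1 - z.2.2) / 2

def G4 (z : Pt) : ℝ :=
  -dot (z.2.1 + z.2.2) (z.2.1 - (0, 1 - z.1)) + dot (z.2.1 + z.2.2) (z.2.1 + z.2.2) / 2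

set_option maxHeartbeats 1000000 in
theorem stmt15 (ρ k : ℝ) (v m : ℝ × ℝ) (hρ : |ρ| ≤ 1) (hv : v ≠ 0)
    (hcone : ρ - (1 - ρ ^ 2) * v.2 / dot v v ≥ 1) (hm : m = k • v)
    (hG1 : nrm (m - ρ • v + (0, (1 - ρ ^ 2) / 2)) ≤ (1 - ρ ^ 2) / 2)
    (hG3 : (1 - ρ) * G3 (ρ, v, m) ≤ 0) :
    1 ≤ k ∧ k ≤ ρ - (1 - ρ ^ 2) * v.2 / dot v v := by

  subst hm
  rw [abs_le] at hρ
  have hA : 0 < dot v v := by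
    rcases (by simpa [Prod.ext_iff] using hv : ¬(v.1 = 0 ∧ v.2 = 0)) with h
    unfold dot
    rcases eq_or_ne v.1 0 with h1 | h1
    · have h2 : v.2 ≠ 0 := fun h2 => h ⟨h1, h2⟩
      nlinarith [sq_nonneg v.1, sq_nonneg v.2, sq_abs v.2, abs_pos.mpr h2]
    · nlinarith [sq_nonneg v.2, sq_abs v.1, abs_pos.mpr h1]
  have hAd : dot v v = v.1 * v.1 + v.2 * v.2 := rfl
  set A := dot v v with hAdef
  -- turn hG1 into a polynomial inequality
  have hc : 0 ≤ (1 - ρ ^ 2) / 2 := by nlinarith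
  have hs : 0 ≤ ((k • v : ℝ × ℝ) - ρ • v + (0, (1 - ρ ^ 2) / 2)).1 ^ 2 +
      ((k • v : ℝ × ℝ) - ρ • v + (0, (1 - ρ ^ 2) / 2)).2 ^ 2 := by positivity
  have h1 : (k * v.1 - ρ * v.1) ^ 2 + (k * v.2 - ρ * v.2 + (1 - ρ ^ 2) / 2) ^ 2
      ≤ ((1 - ρ ^ 2) / 2) ^ 2 := by
    have := Real.sq_sqrt hs
    have h2 : nrm ((k • v : ℝ × ℝ) - ρ • v + (0, (1 - ρ ^ 2) / 2)) ≤ (1 - ρ ^ 2) / 2 := hG1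
    unfold nrm at h2
    have h3 := Real.sqrt_nonneg (((k • v : ℝ × ℝ) - ρ • v + (0, (1 - ρ ^ 2) / 2)).1 ^ 2 +
      ((k • v : ℝ × ℝ) - ρ • v + (0, (1 - ρ ^ 2) / 2)).2 ^ 2)
    have h4 : ((k • v : ℝ × ℝ) - ρ • v + (0, (1 - ρ ^ 2) / 2)).1 = k * v.1 - ρ * v.1 := by
      simp [Prod.smul_def, smul_eq_mul]
    have h5 : ((k • v : ℝ × ℝ) - ρ • v + (0, (1 - ρ ^ 2) / 2)).2
        = k * v.2 - ρ * v.2 + (1 - ρ ^ 2) / 2 := by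
      simp [Prod.smul_def, smul_eq_mul]
    rw [h4, h5] at this h2 h3
    nlinarith [this, h2, h3]
  -- quadratic in (k - ρ)
  have hQ : (k - ρ) * ((k - ρ) * A + (1 - ρ ^ 2) * v.2) ≤ 0 := by
    rw [hAd]; nlinarith [h1]
  -- cone condition as polynomial
  have hcone' : (1 - ρ ^ 2) * v.2 ≤ (ρ - 1) * A := by
    have : (1 - ρ ^ 2) * v.2 / A ≤ ρ - 1 := by linarith [hcone]
    calc (1 - ρ ^ 2) * v.2 = (1 - ρ ^ 2) * v.2 / A * A := by field_simp
    _ ≤ (ρ - 1) * A := by nlinarith [this, hA]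
  -- G3 expanded
  have hG3' : (1 - ρ) * (-(1 - k) * (A + (1 + ρ) * v.2) + (1 - k) ^ 2 * A / 2) ≤ 0 := by
    have : G3 (ρ, v, k • v) = -(1 - k) * (A + (1 + ρ) * v.2) + (1 - k) ^ 2 * A / 2 := by
      unfold G3 dot
      simp only [Prod.smul_def, smul_eq_mul, Prod.fst_sub, Prod.snd_sub, Prod.fst_add,
        Prod.snd_add]
      rw [hAd]; ring
    rw [this] at hG3; exact hG3
  rcases eq_or_lt_of_le hρ.2 with hρ1 | hρ1
  · -- ρ = 1 case
    subst hρ1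
    have hz : (k - 1) ^ 2 * A = 0 := by rw [hAd]; nlinarith [h1]
    have hk : k = 1 := by
      rcases mul_eq_zero.mp hz with h | h
      · have := pow_eq_zero_iff (n := 2) (by norm_num) |>.mp h; linarith
      · linarith [hA]
    subst hk
    constructor
    · linarith
    · have : (1 - 1 ^ 2 : ℝ) * v.2 / A = 0 := by norm_num
      rw [this]; norm_num
  · -- ρ < 1 case
    have hρ' : 0 < 1 - ρ := by linarith
    have h2 : (1 + ρ) * v.2 ≤ -A := by nlinarith [hcone']
    constructor
    · by_contra hk
      push_neg at hk
      have ht : 0 < 1 - k := by linarith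
      nlinarith [hG3', mul_pos ht hA, mul_pos (mul_pos ht ht) hA, h2,
        mul_pos hρ' (mul_pos ht hA)]
    · have key : (1 - ρ ^ 2) * v.2 ≤ (ρ - k) * A := by
        rcases le_or_gt k ρ with h | h
        · nlinarith [hcone', hA]
        · nlinarith [hQ]
      have : (1 - ρ ^ 2) * v.2 / A ≤ ρ - k := by
        rw [div_le_iff₀ hA]; linarith [key]
      linarith
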